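/- Let t, v ≥ 1 and n > t, and for each u ∈ {1,…,t} let 0 ≤ ρ_1(u), ρ_0(u) ≤ 1. Let {X^{(u)}_j : 1 ≤ u ≤ t, 1 ≤ j ≤ u} ∪ {Y^{(u)}_k : 1 ≤ u ≤ t, 1 ≤ k ≤ n−u} be a mutually independent family of random variables taking values in {0,…,v}, with P(X^{(u)}_j = z) = g_1^{(u)}(z) = C(v,z)·ρ_1(u)^z·(1−ρ_1(u))^{v−z} and P(Y^{(u)}_k = z) = g_0^{(u)}(z) = C(v,z)·ρ_0(u)^z·(1−ρ_0(u))^{v−z}. Then the probability of the event 'for every u ∈ {1,…,t}, max_k Y^{(u)}_k < max_j X^{(u)}_j' equals ∏_{u=1}^{t} Σ_{x=0}^{v−1} f_1^{(u)}(x)·f_0^{(u)}(x), where f_1^{(u)}(x) = 1 − (Σ_{z=0}^{x} g_1^{(u)}(z))^u, f_0^{(u)}(0) = (g_0^{(u)}(0))^{n−u}, and f_0^{(u)}(x) = (Σ_{z=0}^{x} g_0^{(u)}(z))^{n−u} − (Σ_{z=0}^{x−1} g_0^{(u)}(z))^{n−u} for x ≥ 1. Consequently, the probability of the complementary (failure)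 event equals 1 − ∏_{u=1}^{t} Σ_{x=0}^{v−1} f_1^{(u)}(x)·f_0^{(u)}(x). -/

import Mathlib

open MeasureTheory ProbabilityTheory

lemma comap_tuple_mono {Ω ι : Type*} [MeasurableSpace Ω] (f : ι → Ω → ℕ)
    (S T : Finset ι) (hST : S ⊆ T) :
    MeasurableSpace.comap (fun ω (i : S) => f i ω) MeasurableSpace.pi
      ≤ MeasurableSpace.comap (fun ω (i : T) => f i ω) MeasurableSpace.pi := by
  have : (fun ω (i : S) => f i ω)
      = (fun (g : T → ℕ) (i : S) => g ⟨i.1, hST i.2⟩) ∘ (fun ω (i : T) => f i ω) := rfl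
  rw [this, ← MeasurableSpace.comap_comp]
  exact MeasurableSpace.comap_mono
    ((measurable_pi_lambda _ (fun i => measurable_pi_apply _)).comap_le)

lemma grouped_indep {Ω ι τ : Type*} [MeasurableSpace Ω] {μ : Measure Ω}
    [IsProbabilityMeasure μ] {f : ι → Ω → ℕ}
    (hindep : iIndepFun f μ) (hmeas : ∀ i, Measurable (f i))
    (S : τ → Finset ι) (hdisj : ∀ a b, a ≠ b → Disjoint (S a) (S b))
    (A : τ → Set Ω)
    (hA : ∀ a, MeasurableSet[MeasurableSpace.comap
        (fun ω (i : (S a : Finset ι)) => f i ω) MeasurableSpace.pi] (A a))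
    (F : Finset τ) :
    μ (⋂ a ∈ F, A a) = ∏ a ∈ F, μ (A a) := by
  classical
  induction F using Finset.induction with
  | empty => simp
  | @insert a F ha ih =>
    set T : Finset ι := F.biUnion S with hT
    have hdisjT : Disjoint (S a) T := by
      rw [hT, Finset.disjoint_biUnion_right]
      exact fun b hb => hdisj a b (fun h => ha (h ▸ hb))
    have key : IndepFun (fun ω (i : (S a : Finset ι)) => f i ω)
        (fun ω (i : (T : Finset ι)) => f i ω) μ :=
      hindep.indepFun_finset (S a) T hdisjT hmeas
    have hB : MeasurableSet[MeasurableSpace.comap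
        (fun ω (i : (T : Finset ι)) => f i ω) MeasurableSpace.pi] (⋂ b ∈ F, A b) := by
      refine MeasurableSet.biInter F.countable_toSet (fun b hb => ?_)
      exact comap_tuple_mono f (S b) T (fun i hi => Finset.mem_biUnion.2 ⟨b, hb, hi⟩) _ (hA b)
    rw [Finset.set_biInter_insert, Finset.prod_insert ha, ← ih,
      key.meas_inter (hA a) hB]
lemma block_calc {Ω : Type*} [MeasurableSpace Ω] (μ : Measure Ω) [IsProbabilityMeasure μ]
    (v m r : ℕ) (W : Fin m → Ω → ℕ) (Z : Fin r → Ω → ℕ)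
    (hWm : ∀ j, Measurable (W j)) (hZm : ∀ k, Measurable (Z k))
    (hWv : ∀ j ω, W j ω ≤ v)
    (G1 G0 : ℕ → ℝ)
    (hW : ∀ j z, (μ {ω | W j ω = z}).toReal = G1 z)
    (hZ : ∀ k z, (μ {ω | Z k ω = z}).toReal = G0 z)
    (hWindep : ∀ x : ℕ, μ (⋂ j, {ω | W j ω ≤ x}) = ∏ j, μ {ω | W j ω ≤ x})
    (hZindep : ∀ x : ℕ, μ (⋂ k, {ω | Z k ω ≤ x}) = ∏ k, μ {ω | Z k ω ≤ x})
    (hWZ : ∀ x : ℕ, μ ({ω | Finset.univ.sup (fun k => Z k ω) = x}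
        ∩ {ω | x < Finset.univ.sup (fun j => W j ω)})
      = μ {ω | Finset.univ.sup (fun k => Z k ω) = x}
        * μ {ω | x < Finset.univ.sup (fun j => W j ω)}) :
    MeasurableSet {ω | Finset.univ.sup (fun k => Z k ω) < Finset.univ.sup (fun j => W j ω)}
    ∧ (μ {ω | Finset.univ.sup (fun k => Z k ω)
          < Finset.univ.sup (fun j => W j ω)}).toReal
      = ∑ x ∈ Finset.range v,
          (1 - (∑ z ∈ Finset.range (x + 1), G1 z) ^ m) *
          (if x = 0 then G0 0 ^ r
            else (∑ z ∈ Finset.range (x + 1), G0 z) ^ r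
              - (∑ z ∈ Finset.range x, G0 z) ^ r) := by
  classical
  set c1 : ℕ → ℝ := fun x => ∑ z ∈ Finset.range (x + 1), G1 z with hc1
  set c0 : ℕ → ℝ := fun x => ∑ z ∈ Finset.range (x + 1), G0 z with hc0
  -- single-variable CDFs
  have hle : ∀ {q : ℕ} (V : Fin q → Ω → ℕ) (hVm : ∀ j, Measurable (V j))
      (G : ℕ → ℝ) (hV : ∀ j z, (μ {ω | V j ω = z}).toReal = G z) (j : Fin q) (x : ℕ),
      (μ {ω | V j ω ≤ x}).toReal = ∑ z ∈ Finset.range (x + 1), G z := by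
    intro q V hVm G hV j x
    have hs : {ω | V j ω ≤ x} = ⋃ z ∈ Finset.range (x + 1), {ω | V j ω = z} := by
      ext ω; simp [Nat.lt_succ_iff]
    have hmz : ∀ z : ℕ, MeasurableSet {ω | V j ω = z} :=
      fun z => hVm j (measurableSet_singleton z)
    have hd : Set.PairwiseDisjoint ↑(Finset.range (x + 1))
        (fun z => {ω | V j ω = z}) := by
      intro z _ z' _ hne
      simp only [Function.onFun]
      exact Set.disjoint_left.2 fun ω h h' => hne (h.symm.trans h')
    rw [hs, measure_biUnion_finset hd (fun z _ => hmz z),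
      ENNReal.toReal_sum (fun z _ => measure_ne_top μ _)]
    exact Finset.sum_congr rfl fun z _ => hV j z
  -- sup CDFs
  have hsupWle : ∀ x, {ω | Finset.univ.sup (fun j => W j ω) ≤ x}
      = ⋂ j, {ω | W j ω ≤ x} := by
    intro x; ext ω; simp [Finset.sup_le_iff]
  have hsupZle : ∀ x, {ω | Finset.univ.sup (fun k => Z k ω) ≤ x}
      = ⋂ k, {ω | Z k ω ≤ x} := by
    intro x; ext ω; simp [Finset.sup_le_iff]
  have hWleMeas : ∀ x, MeasurableSet {ω | Finset.univ.sup (fun j => W j ω) ≤ x} := by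
    intro x; rw [hsupWle]; exact MeasurableSet.iInter fun j => hWm j (measurableSet_Iic (a := x))
  have hZleMeas : ∀ x, MeasurableSet {ω | Finset.univ.sup (fun k => Z k ω) ≤ x} := by
    intro x; rw [hsupZle]; exact MeasurableSet.iInter fun k => hZm k (measurableSet_Iic (a := x))
  have hcdfW : ∀ x, (μ {ω | Finset.univ.sup (fun j => W j ω) ≤ x}).toReal = c1 x ^ m := by
    intro x
    rw [hsupWle, hWindep x, ENNReal.toReal_prod]
    simp [hle W hWm G1 hW, hc1]
  have hcdfZ : ∀ x, (μ {ω | Finset.univ.sup (fun k => Z k ω) ≤ x}).toReal = c0 x ^ r := by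
    intro x
    rw [hsupZle, hZindep x, ENNReal.toReal_prod]
    simp [hle Z hZm G0 hZ, hc0]
  -- tail of W-sup
  have hGset : ∀ x, {ω | x < Finset.univ.sup (fun j => W j ω)}
      = {ω | Finset.univ.sup (fun j => W j ω) ≤ x}ᶜ := by
    intro x; ext ω; simp [not_le]
  have hGmeas : ∀ x, MeasurableSet {ω | x < Finset.univ.sup (fun j => W j ω)} := by
    intro x; rw [hGset]; exact (hWleMeas x).compl
  have hGx : ∀ x, (μ {ω | x < Finset.univ.sup (fun j => W j ω)}).toReal = 1 - c1 x ^ m := by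
    intro x
    rw [hGset, prob_compl_eq_one_sub (hWleMeas x),
      ENNReal.toReal_sub_of_le prob_le_one ENNReal.one_ne_top, ENNReal.toReal_one, hcdfW]
  -- point masses of Z-sup
  have hEsucc : ∀ x : ℕ, {ω | Finset.univ.sup (fun k => Z k ω) ≤ x + 1}
      = {ω | Finset.univ.sup (fun k => Z k ω) = x + 1}
        ∪ {ω | Finset.univ.sup (fun k => Z k ω) ≤ x} := by
    intro x; ext ω
    simp only [Set.mem_union, Set.mem_setOf_eq]; omega
  have hE0 : {ω | Finset.univ.sup (fun k => Z k ω) = 0}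
      = {ω | Finset.univ.sup (fun k => Z k ω) ≤ 0} := by
    ext ω; simp [Nat.le_zero]
  have hEmeas : ∀ x, MeasurableSet {ω | Finset.univ.sup (fun k => Z k ω) = x} := by
    intro x
    match x with
    | 0 => rw [hE0]; exact hZleMeas 0
    | Nat.succ x =>
      have : {ω | Finset.univ.sup (fun k => Z k ω) = x + 1}
          = {ω | Finset.univ.sup (fun k => Z k ω) ≤ x + 1}
            \ {ω | Finset.univ.sup (fun k => Z k ω) ≤ x} := by
        ext ω; simp only [Set.mem_diff, Set.mem_setOf_eq]; omega
      rw [this]; exact (hZleMeas _).diff (hZleMeas _)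
  have hE : ∀ x, (μ {ω | Finset.univ.sup (fun k => Z k ω) = x}).toReal
      = (if x = 0 then G0 0 ^ r
          else c0 x ^ r - (∑ z ∈ Finset.range x, G0 z) ^ r) := by
    intro x
    match x with
    | 0 =>
      simp only [if_pos rfl]
      rw [hE0, hcdfZ]
      simp [hc0, Finset.sum_range_one]
    | Nat.succ x =>
      simp only [Nat.succ_ne_zero, if_false]
      have hdisj : Disjoint {ω | Finset.univ.sup (fun k => Z k ω) = x + 1}
          {ω | Finset.univ.sup (fun k => Z k ω) ≤ x} :=
        Set.disjoint_left.2 fun ω h h' => by simp only [Set.mem_setOf_eq] at h h'; omega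
      have := measure_union (μ := μ) hdisj (hZleMeas x)
      rw [← hEsucc x] at this
      have h2 := congrArg ENNReal.toReal this
      rw [ENNReal.toReal_add (measure_ne_top μ _) (measure_ne_top μ _), hcdfZ, hcdfZ] at h2
      have hr : (∑ z ∈ Finset.range (x + 1), G0 z) ^ r = c0 x ^ r := rfl
      rw [hr]
      linarith
  -- decompose the main event
  have hA : {ω | Finset.univ.sup (fun k => Z k ω) < Finset.univ.sup (fun j => W j ω)}
      = ⋃ x ∈ Finset.range v, ({ω | Finset.univ.sup (fun k => Z k ω) = x}
          ∩ {ω | x < Finset.univ.sup (fun j => W j ω)}) := by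
    ext ω
    simp only [Set.mem_setOf_eq, Set.mem_iUnion, Set.mem_inter_iff, Finset.mem_range,
      exists_prop]
    constructor
    · intro h
      have hWb : Finset.univ.sup (fun j => W j ω) ≤ v :=
        Finset.sup_le fun j _ => hWv j ω
      exact ⟨Finset.univ.sup (fun k => Z k ω), lt_of_lt_of_le h hWb, rfl, h⟩
    · rintro ⟨x, _, hx, hlt⟩
      omega
  have hAmeas : MeasurableSet {ω | Finset.univ.sup (fun k => Z k ω)
      < Finset.univ.sup (fun j => W j ω)} := by
    rw [hA]
    exact (Finset.range v).measurableSet_biUnion fun x _ => (hEmeas x).inter (hGmeas x)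
  refine ⟨hAmeas, ?_⟩
  have hd : Set.PairwiseDisjoint ↑(Finset.range v)
      (fun x => {ω | Finset.univ.sup (fun k => Z k ω) = x}
        ∩ {ω | x < Finset.univ.sup (fun j => W j ω)}) := by
    intro x _ x' _ hne
    simp only [Function.onFun]
    exact Set.disjoint_left.2 fun ω ⟨h1, _⟩ ⟨h2, _⟩ => hne (h1.symm.trans h2)
  rw [hA, measure_biUnion_finset hd (fun x _ => (hEmeas x).inter (hGmeas x)),
    ENNReal.toReal_sum (fun x _ => measure_ne_top μ _)]
  refine Finset.sum_congr rfl fun x _ => ?_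
  rw [hWZ x, ENNReal.toReal_mul, hE x, hGx x, mul_comm]

lemma comap_meas {Ω ι : Type*} [MeasurableSpace Ω] (f : ι → Ω → ℕ) (S : Finset ι)
    (M : Set (S → ℕ)) :
    MeasurableSet[MeasurableSpace.comap (fun ω (i : S) => f i ω)
      MeasurableSpace.pi] ((fun ω (i : S) => f i ω) ⁻¹' M) :=
  ⟨M, M.to_countable.measurableSet, rfl⟩

theorem bfmax_dfr_formula (t v n : ℕ) (ht : 1 ≤ t) (hv : 1 ≤ v) (hn : t < n)
    (ρ1 ρ0 : ℕ → ℝ)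
    (hρ1 : ∀ u, 1 ≤ u → u ≤ t → 0 ≤ ρ1 u ∧ ρ1 u ≤ 1)
    (hρ0 : ∀ u, 1 ≤ u → u ≤ t → 0 ≤ ρ0 u ∧ ρ0 u ≤ 1)
    {Ω : Type*} [MeasurableSpace Ω] (μ : Measure Ω) [IsProbabilityMeasure μ]
    (X : ∀ u : Fin t, Fin (u.val + 1) → Ω → ℕ)
    (Y : ∀ u : Fin t, Fin (n - (u.val + 1)) → Ω → ℕ)
    (hXmeas : ∀ u j, Measurable (X u j)) (hYmeas : ∀ u k, Measurable (Y u k))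
    (hXval : ∀ u j ω, X u j ω ≤ v) (hYval : ∀ u k ω, Y u k ω ≤ v)
    (hindep : iIndepFun
      (fun p : Σ u : Fin t, (Fin (u.val + 1) ⊕ Fin (n - (u.val + 1))) =>
        Sum.elim (X p.1) (Y p.1) p.2) μ)
    (g1 g0 : ℕ → ℕ → ℝ)
    (hg1 : ∀ u z, g1 u z = (Nat.choose v z : ℝ) * ρ1 u ^ z * (1 - ρ1 u) ^ (v - z))
    (hg0 : ∀ u z, g0 u z = (Nat.choose v z : ℝ) * ρ0 u ^ z * (1 - ρ0 u) ^ (v - z))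
    (hXdist : ∀ (u : Fin t) j z, (μ {ω | X u j ω = z}).toReal = g1 (u.val + 1) z)
    (hYdist : ∀ (u : Fin t) k z, (μ {ω | Y u k ω = z}).toReal = g0 (u.val + 1) z)
    (f1 f0 : ℕ → ℕ → ℝ)
    (hf1 : ∀ u x, f1 u x = 1 - (∑ z ∈ Finset.range (x + 1), g1 u z) ^ u)
    (hf00 : ∀ u, f0 u 0 = g0 u 0 ^ (n - u))
    (hf0 : ∀ u x, 1 ≤ x → f0 u x = (∑ z ∈ Finset.range (x + 1), g0 u z) ^ (n - u)
        - (∑ z ∈ Finset.range x, g0 u z) ^ (n - u)) :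
    ((μ {ω | ∀ u : Fin t,
        Finset.univ.sup (fun k => Y u k ω) < Finset.univ.sup (fun j => X u j ω)}).toReal
      = ∏ u ∈ Finset.Icc 1 t, ∑ x ∈ Finset.range v, f1 u x * f0 u x)
    ∧ ((μ {ω | ¬ ∀ u : Fin t,
        Finset.univ.sup (fun k => Y u k ω) < Finset.univ.sup (fun j => X u j ω)}).toReal
      = 1 - ∏ u ∈ Finset.Icc 1 t, ∑ x ∈ Finset.range v, f1 u x * f0 u x) := by
  classical
  set f : (Σ u : Fin t, (Fin (u.val + 1) ⊕ Fin (n - (u.val + 1)))) → Ω → ℕ :=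
    fun p => Sum.elim (X p.1) (Y p.1) p.2 with hfdef
  have hfm : ∀ p, Measurable (f p) := by
    rintro ⟨u, j | k⟩
    · exact hXmeas u j
    · exact hYmeas u k
  set SX : ∀ u : Fin t, Finset ((u : Fin t) × (Fin (u.val + 1) ⊕ Fin (n - (u.val + 1)))) :=
    fun u => Finset.univ.image (fun j : Fin (u.val + 1) =>
      (⟨u, Sum.inl j⟩ : Σ u : Fin t, (Fin (u.val + 1) ⊕ Fin (n - (u.val + 1))))) with hSX
  set SY : ∀ u : Fin t, Finset ((u : Fin t) × (Fin (u.val + 1) ⊕ Fin (n - (u.val + 1)))) :=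
    fun u => Finset.univ.image (fun k : Fin (n - (u.val + 1)) =>
      (⟨u, Sum.inr k⟩ : Σ u : Fin t, (Fin (u.val + 1) ⊕ Fin (n - (u.val + 1))))) with hSY
  set SB := fun u => SX u ∪ SY u with hSB
  have hmemX : ∀ (u : Fin t) (j), (⟨u, Sum.inl j⟩ :
      Σ u : Fin t, (Fin (u.val + 1) ⊕ Fin (n - (u.val + 1)))) ∈ SX u :=
    fun u j => Finset.mem_image_of_mem _ (Finset.mem_univ j)
  have hmemY : ∀ (u : Fin t) (k), (⟨u, Sum.inr k⟩ :
      Σ u : Fin t, (Fin (u.val + 1) ⊕ Fin (n - (u.val + 1)))) ∈ SY u :=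
    fun u k => Finset.mem_image_of_mem _ (Finset.mem_univ k)
  have hmemXB : ∀ (u : Fin t) (j), (⟨u, Sum.inl j⟩ :
      Σ u : Fin t, (Fin (u.val + 1) ⊕ Fin (n - (u.val + 1)))) ∈ SB u :=
    fun u j => Finset.mem_union_left _ (hmemX u j)
  have hmemYB : ∀ (u : Fin t) (k), (⟨u, Sum.inr k⟩ :
      Σ u : Fin t, (Fin (u.val + 1) ⊕ Fin (n - (u.val + 1)))) ∈ SB u :=
    fun u k => Finset.mem_union_right _ (hmemY u k)
  have hfstB : ∀ (u : Fin t) p, p ∈ SB u → p.1 = u := by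
    intro u p hp
    rcases Finset.mem_union.1 hp with h | h
    · rcases Finset.mem_image.1 h with ⟨j, -, rfl⟩; rfl
    · rcases Finset.mem_image.1 h with ⟨k, -, rfl⟩; rfl
  have hdisjB : ∀ a b : Fin t, a ≠ b → Disjoint (SB a) (SB b) := by
    intro a b hab
    exact Finset.disjoint_left.2 fun p hpa hpb =>
      hab ((hfstB a p hpa).symm.trans (hfstB b p hpb))
  have hdisjYX : ∀ u : Fin t, Disjoint (SY u) (SX u) := by
    intro u
    refine Finset.disjoint_left.2 fun p hpy hpx => ?_
    rcases Finset.mem_image.1 hpy with ⟨k, -, rfl⟩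
    rcases Finset.mem_image.1 hpx with ⟨j, -, hj⟩
    simp at hj
  -- per-block within-group independence for X
  have hXindep : ∀ (u : Fin t) (x : ℕ),
      μ (⋂ j, {ω | X u j ω ≤ x}) = ∏ j, μ {ω | X u j ω ≤ x} := by
    intro u x
    have hinj : ∀ a ∈ (Finset.univ : Finset (Fin (u.val + 1))),
        ∀ b ∈ (Finset.univ : Finset (Fin (u.val + 1))),
        (⟨u, Sum.inl a⟩ : Σ u : Fin t, (Fin (u.val + 1) ⊕ Fin (n - (u.val + 1))))
          = ⟨u, Sum.inl b⟩ → a = b := by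
      intro a _ b _ h; simpa using h
    have h := hindep.meas_biInter (S := SX u)
      (s := fun p => f p ⁻¹' Set.Iic x) (fun p _ => ⟨Set.Iic x, trivial, rfl⟩)
    rw [hSX] at h
    rw [Finset.set_biInter_finset_image, Finset.prod_image hinj] at h
    have heq : ∀ j : Fin (u.val + 1),
        (f ⟨u, Sum.inl j⟩ ⁻¹' Set.Iic x) = {ω | X u j ω ≤ x} := fun j => rfl
    simp only [heq, Finset.mem_univ, Set.iInter_true] at h
    simpa using h
  have hYindep : ∀ (u : Fin t) (x : ℕ),
      μ (⋂ k, {ω | Y u k ω ≤ x}) = ∏ k, μ {ω | Y u k ω ≤ x} := by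
    intro u x
    have hinj : ∀ a ∈ (Finset.univ : Finset (Fin (n - (u.val + 1)))),
        ∀ b ∈ (Finset.univ : Finset (Fin (n - (u.val + 1)))),
        (⟨u, Sum.inr a⟩ : Σ u : Fin t, (Fin (u.val + 1) ⊕ Fin (n - (u.val + 1))))
          = ⟨u, Sum.inr b⟩ → a = b := by
      intro a _ b _ h; simpa using h
    have h := hindep.meas_biInter (S := SY u)
      (s := fun p => f p ⁻¹' Set.Iic x) (fun p _ => ⟨Set.Iic x, trivial, rfl⟩)
    rw [hSY] at h
    rw [Finset.set_biInter_finset_image, Finset.prod_image hinj] at h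
    have heq : ∀ k : Fin (n - (u.val + 1)),
        (f ⟨u, Sum.inr k⟩ ⁻¹' Set.Iic x) = {ω | Y u k ω ≤ x} := fun k => rfl
    simp only [heq, Finset.mem_univ, Set.iInter_true] at h
    simpa using h
  -- cross-group independence within a block
  have hWZ : ∀ (u : Fin t) (x : ℕ),
      μ ({ω | Finset.univ.sup (fun k => Y u k ω) = x}
        ∩ {ω | x < Finset.univ.sup (fun j => X u j ω)})
      = μ {ω | Finset.univ.sup (fun k => Y u k ω) = x}
        * μ {ω | x < Finset.univ.sup (fun j => X u j ω)} := by
    intro u x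
    have key := hindep.indepFun_finset (SY u) (SX u) (hdisjYX u) hfm
    set MY : Set (↥(SY u) → ℕ) :=
      {g | Finset.univ.sup (fun k : Fin (n - (u.val + 1)) =>
        g ⟨⟨u, Sum.inr k⟩, hmemY u k⟩) = x} with hMY
    set MX : Set (↥(SX u) → ℕ) :=
      {g | x < Finset.univ.sup (fun j : Fin (u.val + 1) =>
        g ⟨⟨u, Sum.inl j⟩, hmemX u j⟩)} with hMX
    have hEY : {ω | Finset.univ.sup (fun k => Y u k ω) = x}
        = (fun ω (i : ↥(SY u)) => f i ω) ⁻¹' MY := rfl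
    have hGX : {ω | x < Finset.univ.sup (fun j => X u j ω)}
        = (fun ω (i : ↥(SX u)) => f i ω) ⁻¹' MX := rfl
    rw [hEY, hGX]
    exact key.meas_inter (comap_meas f (SY u) MY) (comap_meas f (SX u) MX)
  -- per-block results
  have hblock : ∀ u : Fin t,
      MeasurableSet {ω | Finset.univ.sup (fun k => Y u k ω)
        < Finset.univ.sup (fun j => X u j ω)}
      ∧ (μ {ω | Finset.univ.sup (fun k => Y u k ω)
            < Finset.univ.sup (fun j => X u j ω)}).toReal
        = ∑ x ∈ Finset.range v, f1 (u.val + 1) x * f0 (u.val + 1) x := by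
    intro u
    obtain ⟨h1, h2⟩ := block_calc μ v (u.val + 1) (n - (u.val + 1)) (X u) (Y u)
      (hXmeas u) (hYmeas u) (hXval u) (g1 (u.val + 1)) (g0 (u.val + 1))
      (hXdist u) (hYdist u) (hXindep u) (hYindep u) (hWZ u)
    refine ⟨h1, h2.trans ?_⟩
    refine Finset.sum_congr rfl fun x _ => ?_
    rw [hf1 (u.val + 1) x]
    rcases Nat.eq_zero_or_pos x with rfl | hx
    · rw [if_pos rfl, hf00 (u.val + 1)]
    · rw [if_neg (by omega), hf0 (u.val + 1) x hx]
  -- comap-measurability of block events for grouping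
  have hAcomap : ∀ u : Fin t, MeasurableSet[MeasurableSpace.comap
      (fun ω (i : ↥(SB u)) => f i ω) MeasurableSpace.pi]
      {ω | Finset.univ.sup (fun k => Y u k ω) < Finset.univ.sup (fun j => X u j ω)} := by
    intro u
    set MA : Set (↥(SB u) → ℕ) :=
      {g | Finset.univ.sup (fun k : Fin (n - (u.val + 1)) =>
          g ⟨⟨u, Sum.inr k⟩, hmemYB u k⟩)
        < Finset.univ.sup (fun j : Fin (u.val + 1) =>
          g ⟨⟨u, Sum.inl j⟩, hmemXB u j⟩)} with hMA
    have hpre : {ω | Finset.univ.sup (fun k => Y u k ω)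
        < Finset.univ.sup (fun j => X u j ω)}
        = (fun ω (i : ↥(SB u)) => f i ω) ⁻¹' MA := rfl
    rw [hpre]
    exact comap_meas f (SB u) MA
  -- grouping
  have hgrp := grouped_indep hindep hfm SB hdisjB
    (fun u => {ω | Finset.univ.sup (fun k => Y u k ω)
      < Finset.univ.sup (fun j => X u j ω)}) hAcomap Finset.univ
  have hseteq : {ω | ∀ u : Fin t,
      Finset.univ.sup (fun k => Y u k ω) < Finset.univ.sup (fun j => X u j ω)}
      = ⋂ u ∈ (Finset.univ : Finset (Fin t)), {ω | Finset.univ.sup (fun k => Y u k ω)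
          < Finset.univ.sup (fun j => X u j ω)} := by
    ext ω
    simp [Set.mem_iInter]
  have hmain : (μ {ω | ∀ u : Fin t,
      Finset.univ.sup (fun k => Y u k ω) < Finset.univ.sup (fun j => X u j ω)}).toReal
      = ∏ u ∈ Finset.Icc 1 t, ∑ x ∈ Finset.range v, f1 u x * f0 u x := by
    rw [hseteq, hgrp, ENNReal.toReal_prod]
    have hstep : ∀ u : Fin t, (μ {ω | Finset.univ.sup (fun k => Y u k ω)
        < Finset.univ.sup (fun j => X u j ω)}).toReal
        = ∑ x ∈ Finset.range v, f1 (u.val + 1) x * f0 (u.val + 1) x :=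
      fun u => (hblock u).2
    rw [Finset.prod_congr rfl fun u _ => hstep u]
    rw [Fin.prod_univ_eq_prod_range (fun i => ∑ x ∈ Finset.range v, f1 (i + 1) x * f0 (i + 1) x) t]
    rw [← Finset.Ico_add_one_right_eq_Icc, Finset.prod_Ico_eq_prod_range]
    simp [add_comm]
  refine ⟨hmain, ?_⟩
  have hcompl : {ω | ¬ ∀ u : Fin t,
      Finset.univ.sup (fun k => Y u k ω) < Finset.univ.sup (fun j => X u j ω)}
      = {ω | ∀ u : Fin t,
        Finset.univ.sup (fun k => Y u k ω) < Finset.univ.sup (fun j => X u j ω)}ᶜ := rfl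
  have hmeasA : MeasurableSet {ω | ∀ u : Fin t,
      Finset.univ.sup (fun k => Y u k ω) < Finset.univ.sup (fun j => X u j ω)} := by
    rw [hseteq]
    exact Finset.univ.measurableSet_biInter fun u _ => (hblock u).1
  rw [hcompl, prob_compl_eq_one_sub hmeasA,
    ENNReal.toReal_sub_of_le prob_le_one ENNReal.one_ne_top, ENNReal.toReal_one, hmain]
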